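/- For sparsity s < d, let k be the smallest positive integer such that C(k(d−s), s) ≥ k(d−1). Then there exists a hypergraph H_0 on k(d−s) vertices with k(d−1) distinct hyperedges, each of cardinality s, such that assigning each hyperedge weight m=1, the expanded multi-hypergraph (each hyperedge replaced by d−s copies) is ((d−1),0)-tight. -/

import Mathlib

open Finset
open Fin.NatCast Fin.CommRing

namespace Stmt15Aux

variable {n : ℕ} [NeZero n]

lemma val_natCast' (j : ℕ) : ((j : Fin n)).val = j % n := by
  simp [Fin.val_natCast]

/-- cyclic interval of length s starting at a -/
def cyc (s : ℕ) (a : Fin n) : Finset (Fin n) :=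
  (Finset.range s).image (fun (j : ℕ) => a + ((j : ℕ) : Fin n))

lemma mem_cyc {s : ℕ} {a x : Fin n} : x ∈ cyc s a ↔ ∃ j < s, a + ((j : ℕ) : Fin n) = x := by
  constructor
  · intro hx
    obtain ⟨j, hj, hjx⟩ := Finset.mem_image.1 hx
    exact ⟨j, Finset.mem_range.1 hj, hjx⟩
  · rintro ⟨j, hj, hjx⟩
    exact Finset.mem_image.2 ⟨j, Finset.mem_range.2 hj, hjx⟩

lemma mem_cyc_val {s : ℕ} (hsn : s ≤ n) {a x : Fin n} :
    x ∈ cyc s a ↔ (x - a).val < s := by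
  constructor
  · rintro hx
    obtain ⟨j, hj, rfl⟩ := mem_cyc.1 hx
    have : a + (j : Fin n) - a = (j : Fin n) := by ring
    rw [this, val_natCast', Nat.mod_eq_of_lt (lt_of_lt_of_le hj hsn)]
    exact hj
  · intro h
    refine mem_cyc.2 ⟨(x - a).val, h, ?_⟩
    rw [Fin.cast_val_eq_self]
    ring

lemma card_cyc {s : ℕ} (hsn : s ≤ n) (a : Fin n) : (cyc s a).card = s := by
  rw [cyc, Finset.card_image_of_injOn, Finset.card_range]
  intro j hj j' hj' h
  simp only [Finset.mem_coe, Finset.mem_range] at hj hj'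
  have h2 : (j : Fin n) = (j' : Fin n) := by exact add_left_cancel h
  have := congrArg Fin.val h2
  rwa [val_natCast', val_natCast', Nat.mod_eq_of_lt (lt_of_lt_of_le hj hsn),
    Nat.mod_eq_of_lt (lt_of_lt_of_le hj' hsn)] at this

lemma cyc_inj {s : ℕ} (hs0 : 0 < s) (hsn : s < n) :
    Function.Injective (cyc (n := n) s) := by
  intro a b hab
  have hsle : s ≤ n := hsn.le
  have hbb : b ∈ cyc s b := (mem_cyc_val hsle).2 (by simp [sub_self, hs0])
  have hba : (b - a).val < s := (mem_cyc_val hsle).1 (hab ▸ hbb)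
  set δ := (b - a).val with hδ
  rcases Nat.eq_zero_or_pos δ with hδ0 | hδpos
  · have hz : b - a = 0 := by
      apply Fin.val_injective
      simp [← hδ, hδ0]
    exact (sub_eq_zero.1 hz).symm
  · exfalso
    have hδn : δ < n := (b - a).isLt
    -- x = b - 1 is in cyc s a but not cyc s b
    have hx1 : (b - 1 - a).val = δ - 1 := by
      have hba' : b - a = (δ : Fin n) := by rw [hδ, Fin.cast_val_eq_self]
      have : b - 1 - a = ((δ - 1 : ℕ) : Fin n) := by
        rw [Nat.cast_sub hδpos]
        push_cast
        rw [← hba']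
        ring
      rw [this, val_natCast', Nat.mod_eq_of_lt (by omega)]
    have hxin : b - 1 ∈ cyc s a := (mem_cyc_val hsle).2 (by omega)
    rw [hab] at hxin
    have hxval : (b - 1 - b).val = n - 1 := by
      have h1 : b - 1 - b = ((n - 1 : ℕ) : Fin n) := by
        rw [Nat.cast_sub (Nat.one_le_iff_ne_zero.2 (NeZero.ne n)), Fin.natCast_self]
        ring
      rw [h1, val_natCast', Nat.mod_eq_of_lt (by omega)]
    have := (mem_cyc_val hsle).1 hxin
    omega

/-- shifts of a set: A + {0,...,t} -/
def shifts (A : Finset (Fin n)) (t : ℕ) : Finset (Fin n) :=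
  (Finset.range (t + 1)).biUnion fun (j : ℕ) => A.image (· + ((j : ℕ) : Fin n))

lemma mem_shifts {A : Finset (Fin n)} {t : ℕ} {x : Fin n} :
    x ∈ shifts A t ↔ ∃ j ≤ t, ∃ a ∈ A, a + ((j : ℕ) : Fin n) = x := by
  constructor
  · intro hx
    obtain ⟨j, hj, hx2⟩ := Finset.mem_biUnion.1 hx
    obtain ⟨a, ha, hax⟩ := Finset.mem_image.1 hx2
    exact ⟨j, Nat.lt_succ_iff.1 (Finset.mem_range.1 hj), a, ha, hax⟩
  · rintro ⟨j, hj, a, ha, hax⟩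
    exact Finset.mem_biUnion.2 ⟨j, Finset.mem_range.2 (Nat.lt_succ_iff.2 hj),
      Finset.mem_image.2 ⟨a, ha, hax⟩⟩

lemma subset_shifts (A : Finset (Fin n)) (t : ℕ) : A ⊆ shifts A t := by
  intro a ha
  exact mem_shifts.2 ⟨0, Nat.zero_le _, a, ha, by simp⟩

lemma shifts_succ (A : Finset (Fin n)) (t : ℕ) :
    shifts A (t + 1) = shifts A t ∪ (shifts A t).image (· + 1) := by
  ext x
  simp only [Finset.mem_union, Finset.mem_image, mem_shifts]
  constructor
  · rintro ⟨j, hj, a, ha, rfl⟩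
    rcases Nat.lt_or_ge j (t + 1) with hj' | hj'
    · exact Or.inl ⟨j, by omega, a, ha, rfl⟩
    · have hj2 : j = t + 1 := by omega
      subst hj2
      refine Or.inr ⟨a + ((t : ℕ) : Fin n), ⟨t, le_refl _, a, ha, rfl⟩, ?_⟩
      push_cast
      ring
  · rintro (⟨j, hj, a, ha, rfl⟩ | ⟨y, ⟨j, hj, a, ha, rfl⟩, rfl⟩)
    · exact ⟨j, by omega, a, ha, rfl⟩
    · refine ⟨j + 1, by omega, a, ha, ?_⟩
      push_cast
      ring

lemma closure_eq_univ (C : Finset (Fin n)) (hC : C.Nonempty)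
    (hcl : ∀ x ∈ C, x + 1 ∈ C) : C = Finset.univ := by
  obtain ⟨a, ha⟩ := hC
  have key : ∀ j : ℕ, a + (j : Fin n) ∈ C := by
    intro j
    induction j with
    | zero => simpa using ha
    | succ j ih =>
      have := hcl _ ih
      have heq : a + ((j : ℕ) : Fin n) + 1 = a + (((j + 1 : ℕ)) : Fin n) := by
        push_cast; ring
      rwa [heq] at this
  apply Finset.eq_univ_of_forall
  intro x
  have := key (x - a).val
  rwa [Fin.cast_val_eq_self, (by ring : a + (x - a) = x)] at this

lemma shifts_card (A : Finset (Fin n)) (hA : A.Nonempty) (t : ℕ) :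
    shifts A t = Finset.univ ∨ A.card + t ≤ (shifts A t).card := by
  induction t with
  | zero =>
    right
    simpa using Finset.card_le_card (subset_shifts A 0)
  | succ t ih =>
    rcases ih with h | h
    · left
      have : shifts A t ⊆ shifts A (t + 1) := by
        rw [shifts_succ]; exact Finset.subset_union_left
      exact Finset.univ_subset_iff.1 (h ▸ this)
    · by_cases himg : (shifts A t).image (· + 1) ⊆ shifts A t
      · left
        have hne : (shifts A t).Nonempty := hA.mono (subset_shifts A t)
        have huniv : shifts A t = Finset.univ := by
          apply closure_eq_univ _ hne
          intro x hx
          exact himg (Finset.mem_image_of_mem _ hx)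
        have : shifts A t ⊆ shifts A (t + 1) := by
          rw [shifts_succ]; exact Finset.subset_union_left
        exact Finset.univ_subset_iff.1 (huniv ▸ this)
      · right
        obtain ⟨z, hz1, hz2⟩ := Finset.not_subset.1 himg
        have : insert z (shifts A t) ⊆ shifts A (t + 1) := by
          rw [shifts_succ]
          intro w hw
          rcases Finset.mem_insert.1 hw with rfl | hw
          · exact Finset.mem_union_right _ hz1
          · exact Finset.mem_union_left _ hw
        calc A.card + (t + 1) ≤ (shifts A t).card + 1 := by omega
          _ = (insert z (shifts A t)).card := (Finset.card_insert_of_notMem hz2).symm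
          _ ≤ _ := Finset.card_le_card this

/-- monotone-ratio bound for binomial coefficients -/
lemma choose_lin_bound {c D s v w : ℕ} (hs : 1 ≤ s) (hw : 1 ≤ w) (hvw : v ≤ w)
    (h : c * Nat.choose w s ≤ D * w) : c * Nat.choose v s ≤ D * v := by
  rcases Nat.eq_zero_or_pos v with rfl | hv
  · simp [Nat.choose_eq_zero_of_lt hs]
  obtain ⟨v', rfl⟩ : ∃ v', v = v' + 1 := ⟨v - 1, by omega⟩
  obtain ⟨w', rfl⟩ : ∃ w', w = w' + 1 := ⟨w - 1, by omega⟩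
  obtain ⟨s', rfl⟩ : ∃ s', s = s' + 1 := ⟨s - 1, by omega⟩
  have idv : (v' + 1) * Nat.choose v' s' = Nat.choose (v' + 1) (s' + 1) * (s' + 1) :=
    Nat.add_one_mul_choose_eq v' s'
  have idw : (w' + 1) * Nat.choose w' s' = Nat.choose (w' + 1) (s' + 1) * (s' + 1) :=
    Nat.add_one_mul_choose_eq w' s'
  have hmono : Nat.choose v' s' ≤ Nat.choose w' s' := Nat.choose_le_choose s' (by omega)
  have key : c * Nat.choose (v' + 1) (s' + 1) * ((s' + 1) * (w' + 1)) ≤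
      D * (v' + 1) * ((s' + 1) * (w' + 1)) := by
    calc c * Nat.choose (v' + 1) (s' + 1) * ((s' + 1) * (w' + 1))
        = c * (Nat.choose (v' + 1) (s' + 1) * (s' + 1)) * (w' + 1) := by ring
      _ = c * ((v' + 1) * Nat.choose v' s') * (w' + 1) := by rw [idv]
      _ ≤ c * ((v' + 1) * Nat.choose w' s') * (w' + 1) := by
          apply Nat.mul_le_mul_right
          apply Nat.mul_le_mul_left
          exact Nat.mul_le_mul_left _ hmono
      _ = (v' + 1) * (c * ((w' + 1) * Nat.choose w' s')) := by ring
      _ = (v' + 1) * (c * (Nat.choose (w' + 1) (s' + 1) * (s' + 1))) := by rw [idw]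
      _ = (v' + 1) * (s' + 1) * (c * Nat.choose (w' + 1) (s' + 1)) := by ring
      _ ≤ (v' + 1) * (s' + 1) * (D * (w' + 1)) := Nat.mul_le_mul_left _ h
      _ = D * (v' + 1) * ((s' + 1) * (w' + 1)) := by ring
  exact Nat.le_of_mul_le_mul_right key (by positivity)

end Stmt15Aux

/-- For sparsity `s < d`, let `k` be the smallest positive integer with
`C(k(d−s), s) ≥ k(d−1)`. Then there is a hypergraph `H₀` on `k(d−s)` vertices with
`k(d−1)` distinct hyperedges of cardinality `s` (each of weight `1`) whose expanded
multi-hypergraph — each hyperedge replaced by `d−s` copies — is `(d−1,0)`-tight: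
the total (expanded) edge count equals `(d−1)` times the vertex count, and every
vertex-induced sub-multi-hypergraph satisfies the `(d−1,0)`-sparsity count. -/
theorem stmt15 (d s k : ℕ) (hs : 0 < s) (hsd : s < d) (hk : 0 < k)
    (hchoose : k * (d - 1) ≤ Nat.choose (k * (d - s)) s)
    (hmin : ∀ k', 0 < k' → k' * (d - 1) ≤ Nat.choose (k' * (d - s)) s → k ≤ k') :
    ∃ E : Finset (Finset (Fin (k * (d - s)))),
      E.card = k * (d - 1) ∧ (∀ e ∈ E, e.card = s) ∧
      (d - s) * E.card = (d - 1) * (k * (d - s)) ∧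
      ∀ V' : Finset (Fin (k * (d - s))),
        (d - s) * (E.filter (fun e => e ⊆ V')).card ≤ (d - 1) * V'.card := by
  have hc1 : 0 < d - s := by omega
  have hn0 : 0 < k * (d - s) := Nat.mul_pos hk hc1
  haveI : NeZero (k * (d - s)) := ⟨hn0.ne'⟩
  by_cases hsn : s < k * (d - s)
  case neg =>
    -- degenerate case: k*(d-s) ≤ s forces k=1, d=2, s=1
    push_neg at hsn
    have hd1 : 0 < d - 1 := by omega
    have hm1 : 0 < k * (d - 1) := Nat.mul_pos hk hd1
    have hns : k * (d - s) = s := by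
      rcases Nat.lt_or_ge (k * (d - s)) s with h | h
      · exfalso
        rw [Nat.choose_eq_zero_of_lt h] at hchoose
        omega
      · omega
    have hC : Nat.choose (k * (d - s)) s = 1 := by rw [hns, Nat.choose_self]
    have hkd : k * (d - 1) = 1 := by omega
    have hk1 : k = 1 := by
      by_contra h
      have h2 : 2 ≤ k := by omega
      have h3 := Nat.mul_le_mul h2 (by omega : 1 ≤ d - 1)
      omega
    have hd2 : d = 2 := by
      rw [hk1, one_mul] at hkd
      omega
    have hs1 : s = 1 := by omega
    subst hk1 hd2 hs1
    refine ⟨{Finset.univ}, by simp, ?_, by simp, ?_⟩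
    · intro e he
      rw [Finset.mem_singleton] at he
      subst he
      rw [Finset.card_univ, Fintype.card_fin]
    · intro V'
      rw [Finset.filter_singleton]
      by_cases h : (Finset.univ : Finset (Fin (1 * (2 - 1)))) ⊆ V'
      · have hVu : V' = Finset.univ := Finset.univ_subset_iff.1 h
        subst hVu
        simp
      · have h0 : (0 : Fin (1 * (2 - 1))) ∉ V' := by
          intro h0
          refine h fun x _ => ?_
          have hx : x = 0 := by omega
          rwa [hx]
        simp [h0]
  case pos =>
    have hsle : s ≤ k * (d - s) := le_of_lt hsn
    set n := k * (d - s) with hn_def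
    -- the cyclic intervals
    set I : Finset (Finset (Fin n)) :=
      (Finset.univ : Finset (Fin n)).image (Stmt15Aux.cyc s) with hI_def
    have hIcard : I.card = n := by
      rw [hI_def, Finset.card_image_of_injective _ (Stmt15Aux.cyc_inj hs hsn),
        Finset.card_univ, Fintype.card_fin]
    have hmn : k * (d - 1) = n + k * (s - 1) := by
      have h1 : (d - 1) = (d - s) + (s - 1) := by omega
      rw [h1, Nat.mul_add, hn_def]
    -- extras
    have hPcard : (Finset.powersetCard s (Finset.univ : Finset (Fin n))).card
        = Nat.choose n s := by
      rw [Finset.card_powersetCard, Finset.card_univ, Fintype.card_fin]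
    have hExcard_le : k * (s - 1) ≤
        ((Finset.powersetCard s (Finset.univ : Finset (Fin n))) \ I).card := by
      have h1 : k * (s - 1) ≤ Nat.choose n s - n := by
        have h2 : n + k * (s - 1) ≤ Nat.choose n s := hmn ▸ hchoose
        omega
      calc k * (s - 1) ≤ Nat.choose n s - n := h1
        _ = (Finset.powersetCard s (Finset.univ : Finset (Fin n))).card - I.card := by
            rw [hPcard, hIcard]
        _ ≤ _ := Finset.le_card_sdiff _ _
    obtain ⟨Ex, hExsub, hExcard⟩ :=
      Finset.exists_subset_card_eq hExcard_le
    set E : Finset (Finset (Fin n)) := I ∪ Ex with hE_def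
    have hdisj : Disjoint I Ex := by
      rw [Finset.disjoint_left]
      intro e heI heEx
      exact (Finset.mem_sdiff.1 (hExsub heEx)).2 heI
    have hEcard : E.card = k * (d - 1) := by
      rw [hE_def, Finset.card_union_of_disjoint hdisj, hIcard, hExcard, hmn]
    have hsizes : ∀ e ∈ E, e.card = s := by
      intro e he
      rcases Finset.mem_union.1 he with heI | heEx
      · obtain ⟨a, _, rfl⟩ := Finset.mem_image.1 heI
        exact Stmt15Aux.card_cyc hsle a
      · exact (Finset.mem_powersetCard.1 (Finset.mem_sdiff.1 (hExsub heEx)).1).2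
    refine ⟨E, hEcard, hsizes, by rw [hEcard]; ring, ?_⟩
    intro V'
    by_cases hVu : V' = Finset.univ
    · subst hVu
      calc (d - s) * (E.filter (fun e => e ⊆ Finset.univ)).card
          ≤ (d - s) * E.card := Nat.mul_le_mul_left _ (Finset.card_filter_le _ _)
        _ = (d - s) * (k * (d - 1)) := by rw [hEcard]
        _ = (d - 1) * n := by rw [hn_def]; ring
        _ = (d - 1) * (Finset.univ : Finset (Fin n)).card := by
            rw [Finset.card_univ, Fintype.card_fin]
    · have hvlt : V'.card < n := by
        have h1 := Finset.card_lt_card (Finset.ssubset_univ_iff.2 hVu)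
        rwa [Finset.card_univ, Fintype.card_fin] at h1
      by_cases hvs : V'.card < s
      · have hempty : E.filter (fun e => e ⊆ V') = ∅ := by
          rw [Finset.filter_eq_empty_iff]
          intro e he hsub
          have h1 : e.card ≤ V'.card := Finset.card_le_card hsub
          rw [hsizes e he] at h1
          omega
        rw [hempty]
        simp
      · push_neg at hvs
        by_cases hvnc : V'.card ≤ n - (d - s)
        · -- numeric route via minimality at k-1
          have hk2 : 2 ≤ k := by
            by_contra hcon
            have hk1 : k = 1 := by omega
            have h1 : n = d - s := by rw [hn_def, hk1, one_mul]
            omega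
          have hblock : Nat.choose ((k - 1) * (d - s)) s < (k - 1) * (d - 1) := by
            by_contra hcon
            push_neg at hcon
            have := hmin (k - 1) (by omega) hcon
            omega
          have hw_eq : (k - 1) * (d - s) = n - (d - s) := by
            rw [Nat.sub_one_mul, hn_def]
          have hwpos : 1 ≤ n - (d - s) := by omega
          have hbound : (d - s) * Nat.choose (n - (d - s)) s ≤ (d - 1) * (n - (d - s)) := by
            rw [← hw_eq]
            calc (d - s) * Nat.choose ((k - 1) * (d - s)) s
                ≤ (d - s) * ((k - 1) * (d - 1)) := Nat.mul_le_mul_left _ (le_of_lt hblock)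
              _ = (d - 1) * ((k - 1) * (d - s)) := by ring
          have hfinal : (d - s) * Nat.choose V'.card s ≤ (d - 1) * V'.card :=
            Stmt15Aux.choose_lin_bound hs hwpos hvnc hbound
          have hcnt : (E.filter (fun e => e ⊆ V')).card ≤ Nat.choose V'.card s := by
            have hsub : E.filter (fun e => e ⊆ V') ⊆ Finset.powersetCard s V' := by
              intro e he
              rw [Finset.mem_powersetCard]
              exact ⟨(Finset.mem_filter.1 he).2, hsizes e (Finset.mem_filter.1 he).1⟩
            calc (E.filter (fun e => e ⊆ V')).card
                ≤ (Finset.powersetCard s V').card := Finset.card_le_card hsub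
              _ = Nat.choose V'.card s := Finset.card_powersetCard s V'
          calc (d - s) * (E.filter (fun e => e ⊆ V')).card
              ≤ (d - s) * Nat.choose V'.card s := Nat.mul_le_mul_left _ hcnt
            _ ≤ (d - 1) * V'.card := hfinal
        · -- interval route
          push_neg at hvnc
          set M := Finset.univ.filter (fun a => Stmt15Aux.cyc s a ⊆ V') with hM_def
          have hIfilter : I.filter (fun e => e ⊆ V') = M.image (Stmt15Aux.cyc s) := by
            ext e
            simp only [hI_def, hM_def, Finset.mem_filter, Finset.mem_image,
              Finset.mem_univ, true_and]
            constructor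
            · rintro ⟨⟨a, rfl⟩, hsub⟩
              exact ⟨a, hsub, rfl⟩
            · rintro ⟨a, ha, rfl⟩
              exact ⟨⟨a, rfl⟩, ha⟩
          have hMcard_eq : (I.filter (fun e => e ⊆ V')).card = M.card := by
            rw [hIfilter, Finset.card_image_of_injective _ (Stmt15Aux.cyc_inj hs hsn)]
          have hMbound : M.card ≤ V'.card - (s - 1) := by
            rcases M.eq_empty_or_nonempty with hMe | hMne
            · rw [hMe]
              simp
            · have hBsub : Stmt15Aux.shifts M (s - 1) ⊆ V' := by
                intro x hx
                obtain ⟨j, hj, a, ha, rfl⟩ := Stmt15Aux.mem_shifts.1 hx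
                have hcy : a + ((j : ℕ) : Fin n) ∈ Stmt15Aux.cyc s a :=
                  Stmt15Aux.mem_cyc.2 ⟨j, by omega, rfl⟩
                exact (Finset.mem_filter.1 ha).2 hcy
              rcases Stmt15Aux.shifts_card M hMne (s - 1) with huniv | hcard
              · exfalso
                have h2 := Finset.card_le_card (huniv ▸ hBsub)
                rw [Finset.card_univ, Fintype.card_fin] at h2
                omega
              · have h2 : (Stmt15Aux.shifts M (s - 1)).card ≤ V'.card :=
                  Finset.card_le_card hBsub
                omega
          have hcnt2 : (E.filter (fun e => e ⊆ V')).card ≤ M.card + k * (s - 1) := by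
            have hsplit : E.filter (fun e => e ⊆ V') =
                I.filter (fun e => e ⊆ V') ∪ Ex.filter (fun e => e ⊆ V') := by
              rw [hE_def, Finset.filter_union]
            rw [hsplit]
            calc (I.filter (fun e => e ⊆ V') ∪ Ex.filter (fun e => e ⊆ V')).card
                ≤ (I.filter (fun e => e ⊆ V')).card + (Ex.filter (fun e => e ⊆ V')).card :=
                  Finset.card_union_le _ _
              _ ≤ M.card + k * (s - 1) := by
                  rw [hMcard_eq]
                  exact Nat.add_le_add_left
                    (le_trans (Finset.card_filter_le _ _) (le_of_eq hExcard)) _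
          obtain ⟨w, hwv⟩ : ∃ w, V'.card = (s - 1) + w := ⟨V'.card - (s - 1), by omega⟩
          have hw1 : 1 ≤ w := by omega
          have hck : (d - s) * k = n := by rw [hn_def]; ring
          have hlin : n ≤ (d - s) + (s - 1) + w := by omega
          have hkey : (s - 1) * n ≤ (s - 1) * ((d - s) + (s - 1) + w) :=
            Nat.mul_le_mul_left _ hlin
          have hDd : d - 1 = (d - s) + (s - 1) := by omega
          calc (d - s) * (E.filter (fun e => e ⊆ V')).card
              ≤ (d - s) * (M.card + k * (s - 1)) := Nat.mul_le_mul_left _ hcnt2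
            _ ≤ (d - s) * ((V'.card - (s - 1)) + k * (s - 1)) :=
                Nat.mul_le_mul_left _ (Nat.add_le_add_right hMbound _)
            _ = (d - s) * (w + k * (s - 1)) := by
                congr 2
                omega
            _ = (d - s) * w + (s - 1) * ((d - s) * k) := by ring
            _ = (d - s) * w + (s - 1) * n := by rw [hck]
            _ ≤ (d - s) * w + (s - 1) * ((d - s) + (s - 1) + w) := Nat.add_le_add_left hkey _
            _ = ((d - s) + (s - 1)) * ((s - 1) + w) := by ring
            _ = (d - 1) * V'.card := by rw [hwv, ← hDd]
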